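/- In the wall-crossing setup, U_{ω_+} ∩ U_{ω_-} = U_{ω_+} ∖ {z ∈ ℂ^m : z_i = 0 for all i ∈ M_-} = U_{ω_-} ∖ {z ∈ ℂ^m : z_i = 0 for all i ∈ M_+}. -/

import Mathlib

/- Formalization of a statement from "The Crepant Transformation Conjecture
for Toric Complete Intersections" (Coates–Iritani–Jiang).

GIT data: `𝕃 = ℤ^r` (modelled by `Fin r → ℤ`), characters `D_1, …, D_m ∈ 𝕃^∨`
(modelled by `D : Fin m → Fin r → ℤ`, viewing `𝕃^∨ ⊗ ℝ` as `Fin r → ℝ`). -/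

open scoped Classical

noncomputable section

namespace CTC

/-- The image of the integral character `D i` in `𝕃^∨ ⊗ ℝ = ℝ^r`. -/
def DR {r m : ℕ} (D : Fin m → Fin r → ℤ) (i : Fin m) : Fin r → ℝ :=
  fun a => (D i a : ℝ)

/-- Integer pairing `v · e` between `𝕃^∨` and `𝕃`. -/
def pairZ {r : ℕ} (v e : Fin r → ℤ) : ℤ := ∑ a, v a * e a

/-- Real pairing `v · e` between `𝕃^∨ ⊗ ℝ` and `𝕃`. -/
def pairR {r : ℕ} (v : Fin r → ℝ) (e : Fin r → ℤ) : ℝ := ∑ a, v a * (e a : ℝ)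

/-- Rational pairing `D_i · f` between a character `D_i ∈ 𝕃^∨` and `f ∈ 𝕃 ⊗ ℚ`. -/
def dotDQ {r : ℕ} (Di : Fin r → ℤ) (f : Fin r → ℚ) : ℚ := ∑ a, (Di a : ℚ) * f a

/-- `∠_I := { Σ_{i ∈ I} a_i D_i : a_i ∈ ℝ, a_i > 0 }`; in particular `∠_∅ = {0}`. -/
def angleCone {m : ℕ} {E : Type*} [AddCommMonoid E] [Module ℝ E]
    (D : Fin m → E) (I : Finset (Fin m)) : Set E :=
  { w | ∃ a : Fin m → ℝ, (∀ i ∈ I, 0 < a i) ∧ w = ∑ i ∈ I, a i • D i }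

/-- The set of anticones `𝒜_ω := { I ⊆ {1,…,m} : ω ∈ ∠_I }`. -/
def anticones {r m : ℕ} (D : Fin m → Fin r → ℤ) (ω : Fin r → ℝ) :
    Set (Finset (Fin m)) :=
  { I | ω ∈ angleCone (DR D) I }

/-- The extended ample cone `C_ω := ⋂_{I ∈ 𝒜_ω} ∠_I`. -/
def extAmpleCone {r m : ℕ} (D : Fin m → Fin r → ℤ) (ω : Fin r → ℝ) :
    Set (Fin r → ℝ) :=
  ⋂ I ∈ anticones D ω, angleCone (DR D) I

/-- `U_ω := ⋃_{I ∈ 𝒜_ω} { z ∈ ℂ^m : z_i ≠ 0 for all i ∈ I }`. -/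
def Uset {r m : ℕ} (D : Fin m → Fin r → ℤ) (ω : Fin r → ℝ) : Set (Fin m → ℂ) :=
  ⋃ I ∈ anticones D ω, { z : Fin m → ℂ | ∀ i ∈ I, z i ≠ 0 }

/-- `S_ω := { i : {1,…,m} ∖ {i} ∉ 𝒜_ω }`. -/
def Sset {r m : ℕ} (D : Fin m → Fin r → ℤ) (ω : Fin r → ℝ) : Finset (Fin m) :=
  Finset.univ.filter fun i => Finset.univ.erase i ∉ anticones D ω

/-- Assumption (⋆): `{1,…,m} ∈ 𝒜_ω`, and for each `I ∈ 𝒜_ω` the set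
`{D_i : i ∈ I}` spans `𝕃^∨ ⊗ ℝ` over `ℝ`. -/
def AssumptionStar {r m : ℕ} (D : Fin m → Fin r → ℤ) (ω : Fin r → ℝ) : Prop :=
  Finset.univ ∈ anticones D ω ∧
    ∀ I ∈ anticones D ω, Submodule.span ℝ (DR D '' (I : Set (Fin m))) = ⊤

/-- The wall `W = { v ∈ 𝕃^∨ ⊗ ℝ : v · e = 0 }`. -/
def wall {r : ℕ} (e : Fin r → ℤ) : Set (Fin r → ℝ) := { v | pairR v e = 0 }

/-- `M_+ := { i : D_i · e > 0 }`. -/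
def Mplus {r m : ℕ} (D : Fin m → Fin r → ℤ) (e : Fin r → ℤ) : Finset (Fin m) :=
  Finset.univ.filter fun i => 0 < pairZ (D i) e

/-- `M_- := { i : D_i · e < 0 }`. -/
def Mminus {r m : ℕ} (D : Fin m → Fin r → ℤ) (e : Fin r → ℤ) : Finset (Fin m) :=
  Finset.univ.filter fun i => pairZ (D i) e < 0

/-- `M_0 := { i : D_i · e = 0 }`. -/
def Mzero {r m : ℕ} (D : Fin m → Fin r → ℤ) (e : Fin r → ℤ) : Finset (Fin m) :=
  Finset.univ.filter fun i => pairZ (D i) e = 0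

/-- The wall-crossing setup of §5.1 of the paper: two stability conditions
`ω_+`, `ω_-` satisfying Assumption (⋆) whose chambers are separated by the
wall `W = e^⊥`, satisfying the crepancy condition `Σ_i D_i · e = 0`, together
with a stability condition `ω₀` in the relative interior of the common facet
`W ∩ closure C_+ = W ∩ closure C_-` (which spans the hyperplane `W`). -/
structure WallCrossingSetup (r m : ℕ) where
  D : Fin m → Fin r → ℤ
  ωp : Fin r → ℝ
  ωm : Fin r → ℝ
  ω₀ : Fin r → ℝ
  e : Fin r → ℤ
  hr : 0 < r
  hrm : r ≤ m
  starP : AssumptionStar D ωp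
  starM : AssumptionStar D ωm
  he : e ≠ 0
  posP : ∀ v ∈ extAmpleCone D ωp, 0 < pairR v e
  negM : ∀ v ∈ extAmpleCone D ωm, pairR v e < 0
  crepant : (∑ i, pairZ (D i) e) = 0
  wallEq : wall e ∩ closure (extAmpleCone D ωp)
      = wall e ∩ closure (extAmpleCone D ωm)
  wallSpanEq : Submodule.span ℝ (wall e ∩ closure (extAmpleCone D ωp))
      = Submodule.span ℝ (wall e)
  interior₀ : ω₀ ∈ intrinsicInterior ℝ (wall e ∩ closure (extAmpleCone D ωp))


/-! ### Auxiliary lemmas -/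

section Aux

variable {r m : ℕ}

lemma pairR_add (v w : Fin r → ℝ) (e : Fin r → ℤ) :
    pairR (v + w) e = pairR v e + pairR w e := by
  simp [pairR, add_mul, Finset.sum_add_distrib]

lemma pairR_smul (c : ℝ) (v : Fin r → ℝ) (e : Fin r → ℤ) :
    pairR (c • v) e = c * pairR v e := by
  simp [pairR, Finset.mul_sum, mul_assoc]

lemma pairR_zero (e : Fin r → ℤ) : pairR (0 : Fin r → ℝ) e = 0 := by
  simp [pairR]

lemma pairR_sum {ι : Type*} (s : Finset ι) (f : ι → Fin r → ℝ) (e : Fin r → ℤ) :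
    pairR (∑ i ∈ s, f i) e = ∑ i ∈ s, pairR (f i) e := by
  classical
  induction s using Finset.induction_on with
  | empty => simp [pairR]
  | insert _ _ h ih => simp [Finset.sum_insert h, pairR_add, ih]

lemma pairR_DR (D : Fin m → Fin r → ℤ) (i : Fin m) (e : Fin r → ℤ) :
    pairR (DR D i) e = (pairZ (D i) e : ℝ) := by
  simp [pairR, pairZ, DR]

lemma pairR_neg (v : Fin r → ℝ) (e : Fin r → ℤ) :
    pairR v (-e) = - pairR v e := by
  simp [pairR, ← Finset.sum_neg_distrib]

lemma pairZ_neg (v e : Fin r → ℤ) : pairZ v (-e) = - pairZ v e := by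
  simp [pairZ, ← Finset.sum_neg_distrib]

lemma wall_neg (e : Fin r → ℤ) : wall (-e) = wall e := by
  ext v; simp [wall, pairR_neg]

lemma Mminus_neg (D : Fin m → Fin r → ℤ) (e : Fin r → ℤ) :
    Mminus D (-e) = Mplus D e := by
  ext i; simp [Mminus, Mplus, pairZ_neg]

lemma Mplus_neg (D : Fin m → Fin r → ℤ) (e : Fin r → ℤ) :
    Mplus D (-e) = Mminus D e := by
  ext i; simp [Mminus, Mplus, pairZ_neg]

end Aux


section Angle

variable {m : ℕ} {E : Type*} [NormedAddCommGroup E] [NormedSpace ℝ E]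

lemma angleCone_smul_mem {D : Fin m → E} {I : Finset (Fin m)} {x : E}
    (hx : x ∈ angleCone D I) {c : ℝ} (hc : 0 < c) : c • x ∈ angleCone D I := by
  obtain ⟨a, ha, rfl⟩ := hx
  exact ⟨fun i => c * a i, fun i hi => mul_pos hc (ha i hi), by
    rw [Finset.smul_sum]; exact Finset.sum_congr rfl fun i _ => (smul_smul c (a i) (D i))⟩

lemma angleCone_convex (D : Fin m → E) (I : Finset (Fin m)) :
    Convex ℝ (angleCone D I) := by
  rintro x ⟨a, ha, rfl⟩ y ⟨b, hb, rfl⟩ s t hs ht hst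
  rcases eq_or_lt_of_le hs with rfl | hs
  · simpa using ⟨b, hb, by rw [zero_add] at hst; simp [hst]⟩
  rcases eq_or_lt_of_le ht with rfl | ht
  · refine ⟨a, ha, ?_⟩
    rw [add_zero] at hst; simp [hst]
  refine ⟨fun i => s * a i + t * b i,
    fun i hi => add_pos (mul_pos hs (ha i hi)) (mul_pos ht (hb i hi)), ?_⟩
  rw [Finset.smul_sum, Finset.smul_sum, ← Finset.sum_add_distrib]
  exact Finset.sum_congr rfl fun i _ => by
    rw [add_smul, smul_smul, smul_smul]

/-- The linear map `(a_i) ↦ ∑_{i ∈ I} a_i D_i`. -/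
def angleMap (D : Fin m → E) (I : Finset (Fin m)) : (Fin m → ℝ) →ₗ[ℝ] E where
  toFun a := ∑ i ∈ I, a i • D i
  map_add' a b := by
    simp only [Pi.add_apply, add_smul, Finset.sum_add_distrib]
  map_smul' c a := by
    simp only [Pi.smul_apply, smul_eq_mul, RingHom.id_apply, Finset.smul_sum, smul_smul]

lemma angleCone_eq_image (D : Fin m → E) (I : Finset (Fin m)) :
    angleCone D I = (angleMap D I) '' { a : Fin m → ℝ | ∀ i ∈ I, 0 < a i } := by
  ext x
  constructor
  · rintro ⟨a, ha, rfl⟩; exact ⟨a, ha, rfl⟩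
  · rintro ⟨a, ha, rfl⟩; exact ⟨a, ha, rfl⟩

lemma angleCone_isOpen [FiniteDimensional ℝ E] {D : Fin m → E} {I : Finset (Fin m)}
    (hspan : Submodule.span ℝ (D '' (I : Set (Fin m))) = ⊤) :
    IsOpen (angleCone D I) := by
  rw [angleCone_eq_image]
  have hcont : Continuous (angleMap D I) := (angleMap D I).continuous_of_finiteDimensional
  have hsurj : Function.Surjective (angleMap D I) := by
    rw [← LinearMap.range_eq_top]
    rw [← top_le_iff, ← hspan, Submodule.span_le]
    rintro v ⟨i, hi, rfl⟩
    refine ⟨fun k => if k = i then 1 else 0, ?_⟩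
    have : ∀ k ∈ I, (if k = i then (1:ℝ) else 0) • D k = if k = i then D k else 0 := by
      intro k _; split <;> simp
    simp only [angleMap, LinearMap.coe_mk, AddHom.coe_mk]
    rw [Finset.sum_congr rfl this, Finset.sum_ite_eq' I i D]
    exact if_pos hi
  have hopen : IsOpenMap (LinearMap.toContinuousLinearMap (angleMap D I)) :=
    ContinuousLinearMap.isOpenMap _ hsurj
  refine hopen _ ?_
  have : { a : Fin m → ℝ | ∀ i ∈ I, 0 < a i } = ⋂ i ∈ I, { a : Fin m → ℝ | 0 < a i } := by
    ext a; simp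
  rw [this]
  exact isOpen_biInter_finset fun i _ => isOpen_lt continuous_const (continuous_apply i)

/-- Sum of a closure point and a cone point lies in an open angle cone. -/
lemma angleCone_closure_add_mem [FiniteDimensional ℝ E] {D : Fin m → E} {I : Finset (Fin m)}
    (hspan : Submodule.span ℝ (D '' (I : Set (Fin m))) = ⊤)
    {y u : E} (hy : y ∈ closure (angleCone D I)) (hu : u ∈ angleCone D I) :
    y + u ∈ angleCone D I := by
  have hopen := angleCone_isOpen hspan
  have h2 : (1/2 : ℝ) • u + (1/2 : ℝ) • y ∈ interior (angleCone D I) :=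
    (angleCone_convex D I).combo_interior_closure_mem_interior
      (by rwa [hopen.interior_eq]) hy (by norm_num) (by norm_num) (by norm_num)
  rw [hopen.interior_eq] at h2
  have := angleCone_smul_mem h2 (show (0:ℝ) < 2 by norm_num)
  rw [smul_add, smul_smul, smul_smul, (by norm_num : (2:ℝ) * (1/2) = 1), one_smul,
    one_smul, add_comm] at this
  exact this

end Angle


section LP

variable {m : ℕ} {E : Type*} [AddCommGroup E] [Module ℝ E]

/-- Feasibility: `x` is a nonnegative representation of `ω` in terms of `d`. -/
def Feas (d : Fin m → E) (ω : E) (x : Fin m → ℝ) : Prop :=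
  (∀ i, 0 ≤ x i) ∧ ∑ i, x i • d i = ω

/-- The objective: total mass outside `S`. -/
def objf (S : Set (Fin m)) (x : Fin m → ℝ) : ℝ :=
  ∑ i ∈ Finset.univ.filter (· ∉ S), x i

/-- "Raw" linear independence of the support of `x`. -/
def RawIndep (d : Fin m → E) (x : Fin m → ℝ) : Prop :=
  ∀ g : Fin m → ℝ, (∀ i, g i ≠ 0 → x i ≠ 0) → ∑ i, g i • d i = 0 → ∀ i, g i = 0

lemma objf_nonneg {S : Set (Fin m)} {x : Fin m → ℝ} (hx : ∀ i, 0 ≤ x i) :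
    0 ≤ objf S x :=
  Finset.sum_nonneg fun i _ => hx i

lemma objf_add_smul (S : Set (Fin m)) (x ρ : Fin m → ℝ) (t : ℝ) :
    objf S (fun i => x i + t * ρ i) = objf S x + t * objf S ρ := by
  simp [objf, Finset.sum_add_distrib, Finset.mul_sum]

lemma sum_add_smul_eq (d : Fin m → E) (x ρ : Fin m → ℝ) (t : ℝ) :
    ∑ i, (x i + t * ρ i) • d i = (∑ i, x i • d i) + t • (∑ i, ρ i • d i) := by
  rw [Finset.smul_sum, ← Finset.sum_add_distrib]
  exact Finset.sum_congr rfl fun i _ => by rw [add_smul, smul_smul]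

lemma exists_rawIndep_le (d : Fin m → E) (ω : E) (S : Set (Fin m)) :
    ∀ (n : ℕ) (x : Fin m → ℝ), (Finset.univ.filter (x · ≠ 0)).card ≤ n →
      Feas d ω x → ∃ y, Feas d ω y ∧ RawIndep d y ∧ objf S y ≤ objf S x := by
  intro n
  induction n with
  | zero =>
    intro x hcard hx
    refine ⟨x, hx, fun g hg _ i => ?_, le_rfl⟩
    by_contra hgi
    have hxi : x i ≠ 0 := hg i hgi
    have : i ∈ Finset.univ.filter (x · ≠ 0) := by simp [hxi]
    have := Finset.card_pos.mpr ⟨i, this⟩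
    omega
  | succ n ih =>
    intro x hcard hx
    by_cases hR : RawIndep d x
    · exact ⟨x, hx, hR, le_rfl⟩
    · simp only [RawIndep, not_forall] at hR
      obtain ⟨g, hsupp, hsum, i₀, hgi₀⟩ := hR
      -- find a descent direction μ
      obtain ⟨μ, hμsum, hμsupp, hμobj, i₁, hi₁⟩ :
          ∃ μ : Fin m → ℝ, (∑ i, μ i • d i = 0) ∧ (∀ i, μ i ≠ 0 → x i ≠ 0) ∧
            objf S μ ≤ 0 ∧ ∃ i, μ i < 0 := by
        have hnegsum : ∑ i, (-g) i • d i = 0 := by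
          simp only [Pi.neg_apply, neg_smul, Finset.sum_neg_distrib, hsum, neg_zero]
        have hnegsupp : ∀ i, (-g) i ≠ 0 → x i ≠ 0 := fun i hi =>
          hsupp i (by simpa using hi)
        rcases lt_trichotomy (objf S g) 0 with h | h | h
        · refine ⟨g, hsum, hsupp, le_of_lt h, ?_⟩
          by_contra hall; push_neg at hall
          exact absurd (objf_nonneg fun i => hall i) (not_le.mpr h)
        · rcases lt_trichotomy (g i₀) 0 with h0 | h0 | h0
          · exact ⟨g, hsum, hsupp, le_of_eq h, i₀, h0⟩
          · exact absurd h0 hgi₀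
          · refine ⟨-g, hnegsum, hnegsupp, ?_, i₀, by simpa using h0⟩
            have : objf S (-g) = - objf S g := by
              simp [objf, Finset.sum_neg_distrib]
            rw [this, h, neg_zero]
        · refine ⟨-g, hnegsum, hnegsupp, ?_, ?_⟩
          · have : objf S (-g) = - objf S g := by
              simp [objf, Finset.sum_neg_distrib]
            rw [this]; linarith
          · have : ∃ i ∈ Finset.univ.filter (· ∉ S), (0:ℝ) < g i := by
              by_contra hc; push_neg at hc
              have : objf S g ≤ 0 := Finset.sum_nonpos fun i hi => hc i hi
              linarith
            obtain ⟨i, _, hi⟩ := this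
            exact ⟨i, by simpa using hi⟩
      set M := Finset.univ.filter (fun i => μ i < 0) with hM
      have hMne : M.Nonempty := ⟨i₁, by simp [hM, hi₁]⟩
      obtain ⟨istar, histar, hminim⟩ := Finset.exists_min_image M (fun i => x i / (-μ i)) hMne
      have hμistar : μ istar < 0 := by simpa [hM] using histar
      have hxistar : 0 < x istar :=
        lt_of_le_of_ne (hx.1 istar) (Ne.symm (hμsupp istar (ne_of_lt hμistar)))
      set θ := x istar / (-μ istar) with hθ
      have hθpos : 0 < θ := div_pos hxistar (neg_pos.mpr hμistar)
      set y := fun i => x i + θ * μ i with hy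
      have hynn : ∀ i, 0 ≤ y i := by
        intro i
        by_cases hμi : μ i < 0
        · have hmem : i ∈ M := by simp [hM, hμi]
          have h1 : θ ≤ x i / (-μ i) := hminim i hmem
          have h2 : θ * (-μ i) ≤ x i := by
            rw [← le_div_iff₀ (neg_pos.mpr hμi)]; exact h1
          simp only [hy]; nlinarith
        · push_neg at hμi
          exact add_nonneg (hx.1 i) (mul_nonneg hθpos.le hμi)
      have hyfeas : Feas d ω y := by
        refine ⟨hynn, ?_⟩
        rw [hy]; rw [sum_add_smul_eq, hμsum, smul_zero, add_zero, hx.2]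
      have hyistar : y istar = 0 := by
        have : θ * (-μ istar) = x istar := div_mul_cancel₀ _ (ne_of_gt (neg_pos.mpr hμistar))
        simp only [hy]; nlinarith
      have hysupp : Finset.univ.filter (y · ≠ 0) ⊂ Finset.univ.filter (x · ≠ 0) := by
        constructor
        · intro i hi
          simp only [Finset.mem_filter, Finset.mem_univ, true_and] at hi ⊢
          intro hxi
          have hμi : μ i = 0 := by
            by_contra hμi; exact (hμsupp i hμi) hxi
          exact hi (by simp [hy, hxi, hμi])
        · intro hsub
          have : istar ∈ Finset.univ.filter (y · ≠ 0) :=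
            hsub (by simp [ne_of_gt hxistar])
          simp [hyistar] at this
      have hycard : (Finset.univ.filter (y · ≠ 0)).card ≤ n := by
        have := Finset.card_lt_card hysupp
        omega
      obtain ⟨z, hz, hzR, hzle⟩ := ih y hycard hyfeas
      refine ⟨z, hz, hzR, le_trans hzle ?_⟩
      have : objf S y = objf S x + θ * objf S μ := objf_add_smul S x μ θ
      nlinarith

lemma rawIndep_finite (d : Fin m → E) (ω : E) :
    {x : Fin m → ℝ | Feas d ω x ∧ RawIndep d x}.Finite := by
  have hinj : Set.InjOn (fun x => Finset.univ.filter (x · ≠ 0))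
      {x : Fin m → ℝ | Feas d ω x ∧ RawIndep d x} := by
    intro x hx y hy hxy
    simp only [Set.mem_setOf_eq] at hx hy
    simp only at hxy
    funext i
    have hsum : ∑ i, (x i - y i) • d i = 0 := by
      have heach : ∀ i, (x i - y i) • d i = x i • d i - y i • d i := fun i => sub_smul _ _ _
      rw [Finset.sum_congr rfl fun i _ => heach i, Finset.sum_sub_distrib, hx.1.2, hy.1.2,
        sub_self]
    have hsupport : ∀ k, (x k - y k) ≠ 0 → x k ≠ 0 := by
      intro k hne hxk
      have hk : k ∉ Finset.univ.filter (x · ≠ 0) := by simp [hxk]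
      rw [hxy] at hk
      have hyk : y k = 0 := by simpa using hk
      rw [hxk, hyk, sub_zero] at hne
      exact hne rfl
    have := hx.2 (fun i => x i - y i) hsupport hsum i
    linarith [this]
  exact Set.Finite.of_finite_image (Set.toFinite _) hinj

lemma exists_min_feas (d : Fin m → E) (ω : E) (S : Set (Fin m))
    (hne : ∃ x, Feas d ω x) :
    ∃ x, Feas d ω x ∧ ∀ y, Feas d ω y → objf S x ≤ objf S y := by
  obtain ⟨x₀, hx₀⟩ := hne
  obtain ⟨y₀, hy₀, hy₀R, _⟩ := exists_rawIndep_le d ω S _ x₀ le_rfl hx₀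
  have hfin := rawIndep_finite d ω
  have hne' : hfin.toFinset.Nonempty := ⟨y₀, by simp [Set.Finite.mem_toFinset]; exact ⟨hy₀, hy₀R⟩⟩
  obtain ⟨xs, hxsmem, hxsmin⟩ := Finset.exists_min_image hfin.toFinset (objf S) hne'
  rw [Set.Finite.mem_toFinset] at hxsmem
  refine ⟨xs, hxsmem.1, fun y hy => ?_⟩
  obtain ⟨z, hz, hzR, hzle⟩ := exists_rawIndep_le d ω S _ y le_rfl hy
  exact le_trans (hxsmin z (by rw [Set.Finite.mem_toFinset]; exact ⟨hz, hzR⟩)) hzle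

end LP


section KeyAbstract

variable {m : ℕ} {E : Type*} [AddCommGroup E] [Module ℝ E]

lemma sum_support_eq_sum_univ {x : Fin m → ℝ} {J : Finset (Fin m)}
    (h : ∀ i, x i ≠ 0 → i ∈ J) (v : Fin m → E) :
    ∑ i ∈ J, x i • v i = ∑ i, x i • v i :=
  Finset.sum_subset (Finset.subset_univ J) (fun i _ hi => by
    have hxi : x i = 0 := by by_contra hc; exact hi (h i hc)
    rw [hxi, zero_smul])

/-- The abstract combinatorial key lemma, proved by a purified linear program. -/
lemma key_abstract (d : Fin m → E) (ω q : E) (S : Set (Fin m))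
    (hfeas : ∃ x : Fin m → ℝ, Feas d ω x)
    (hq : ∀ J : Finset (Fin m), ω ∈ angleCone d J →
        ∃ b : Fin m → ℝ, (∀ i, 0 ≤ b i) ∧ (∀ i, b i ≠ 0 → i ∈ J) ∧ (∀ i ∈ J, 0 < b i) ∧
          ∑ i, b i • d i = q)
    (hqS : ∃ c : Fin m → ℝ, (∀ i, 0 ≤ c i) ∧ (∀ i, c i ≠ 0 → i ∈ S) ∧
        ∑ i, c i • d i = q) :
    ∃ J : Finset (Fin m), ω ∈ angleCone d J ∧ (J : Set (Fin m)) ⊆ S := by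
  obtain ⟨xs, hxsF, hxsmin⟩ := exists_min_feas d ω S hfeas
  set J := Finset.univ.filter (xs · ≠ 0) with hJ
  have hsuppJ : ∀ i, xs i ≠ 0 → i ∈ J := fun i hi => by simp [hJ, hi]
  have hωJ : ω ∈ angleCone d J := by
    refine ⟨xs, fun i hi => ?_, ?_⟩
    · have : xs i ≠ 0 := by simpa [hJ] using hi
      exact lt_of_le_of_ne (hxsF.1 i) (Ne.symm this)
    · rw [sum_support_eq_sum_univ hsuppJ, hxsF.2]
  refine ⟨J, hωJ, ?_⟩
  intro i hiJ
  rw [Finset.mem_coe] at hiJ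
  by_contra hiS
  obtain ⟨b, hb0, hbsupp, hbpos, hbsum⟩ := hq J hωJ
  obtain ⟨c, hc0, hcsupp, hcsum⟩ := hqS
  set ρ := fun k => c k - b k with hρ
  have hρsum : ∑ k, ρ k • d k = 0 := by
    have heach : ∀ k, ρ k • d k = c k • d k - b k • d k := fun k => sub_smul _ _ _
    rw [Finset.sum_congr rfl fun k _ => heach k, Finset.sum_sub_distrib, hcsum, hbsum,
      sub_self]
  have hfρ : objf S ρ < 0 := by
    have h1 : objf S c = 0 := Finset.sum_eq_zero fun k hk => by
      by_contra hck
      have := hcsupp k hck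
      simp only [Finset.mem_filter, Finset.mem_univ, true_and] at hk
      exact hk this
    have h2 : 0 < objf S b := by
      have hmem : i ∈ Finset.univ.filter (· ∉ S) := by simp [hiS]
      have hle : b i ≤ objf S b :=
        Finset.single_le_sum (fun k _ => hb0 k) hmem
      exact lt_of_lt_of_le (hbpos i hiJ) hle
    have h3 : objf S ρ = objf S c - objf S b := by
      simp [objf, hρ, Finset.sum_sub_distrib]
    linarith
  have hρsupp : ∀ k, ρ k < 0 → 0 < xs k := by
    intro k hk
    have hbk : 0 < b k := by
      have hk' : c k - b k < 0 := hk
      linarith [hc0 k]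
    have hkJ : k ∈ J := hbsupp k (ne_of_gt hbk)
    have : xs k ≠ 0 := by simpa [hJ] using hkJ
    exact lt_of_le_of_ne (hxsF.1 k) (Ne.symm this)
  set M := Finset.univ.filter (fun k => ρ k < 0) with hM
  rcases M.eq_empty_or_nonempty with hMe | hMne
  · -- no descent bound: objective goes to -∞, contradiction with nonnegativity
    have hρnn : ∀ k, 0 ≤ ρ k := by
      intro k
      by_contra hc'
      push_neg at hc'
      have : k ∈ M := by simp [hM, hc']
      rw [hMe] at this
      exact absurd this (Finset.notMem_empty k)
    set t := (objf S xs + 1) / (-objf S ρ) with htdef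
    have hxs0 : 0 ≤ objf S xs := objf_nonneg hxsF.1
    have htpos : 0 < t := div_pos (by linarith) (neg_pos.mpr hfρ)
    set y := fun k => xs k + t * ρ k with hy
    have hyfeas : Feas d ω y :=
      ⟨fun k => add_nonneg (hxsF.1 k) (mul_nonneg htpos.le (hρnn k)), by
        rw [hy, sum_add_smul_eq, hρsum, smul_zero, add_zero, hxsF.2]⟩
    have hmin := hxsmin y hyfeas
    rw [hy, objf_add_smul] at hmin
    have ht : t * (-objf S ρ) = objf S xs + 1 :=
      div_mul_cancel₀ _ (ne_of_gt (neg_pos.mpr hfρ))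
    linarith
  · obtain ⟨istar, histar, hminim⟩ := Finset.exists_min_image M (fun k => xs k / (-ρ k)) hMne
    have hρistar : ρ istar < 0 := by simpa [hM] using histar
    have hxistar : 0 < xs istar := hρsupp istar hρistar
    set θ := xs istar / (-ρ istar) with hθ
    have hθpos : 0 < θ := div_pos hxistar (neg_pos.mpr hρistar)
    set y := fun k => xs k + θ * ρ k with hy
    have hynn : ∀ k, 0 ≤ y k := by
      intro k
      by_cases hρk : ρ k < 0
      · have hmem : k ∈ M := by simp [hM, hρk]
        have h1 : θ ≤ xs k / (-ρ k) := hminim k hmem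
        have h2 : θ * (-ρ k) ≤ xs k := by
          rw [← le_div_iff₀ (neg_pos.mpr hρk)]; exact h1
        simp only [hy]; nlinarith
      · push_neg at hρk
        exact add_nonneg (hxsF.1 k) (mul_nonneg hθpos.le hρk)
    have hyfeas : Feas d ω y :=
      ⟨hynn, by rw [hy, sum_add_smul_eq, hρsum, smul_zero, add_zero, hxsF.2]⟩
    have hmin := hxsmin y hyfeas
    rw [hy, objf_add_smul] at hmin
    nlinarith

end KeyAbstract


section Geom

variable {r m : ℕ}

lemma mem_extAmpleCone {D : Fin m → Fin r → ℤ} {ω v : Fin r → ℝ} :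
    v ∈ extAmpleCone D ω ↔ ∀ I ∈ anticones D ω, v ∈ angleCone (DR D) I := by
  simp [extAmpleCone]

lemma self_mem_extAmpleCone (D : Fin m → Fin r → ℤ) (ω : Fin r → ℝ) :
    ω ∈ extAmpleCone D ω :=
  mem_extAmpleCone.mpr fun _ hI => hI

lemma zero_mem_closure_extAmpleCone (D : Fin m → Fin r → ℤ) (ω : Fin r → ℝ) :
    (0 : Fin r → ℝ) ∈ closure (extAmpleCone D ω) := by
  have htend : Filter.Tendsto (fun n : ℕ => (1 / ((n : ℝ) + 1)) • ω) Filter.atTop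
      (nhds (0 : Fin r → ℝ)) := by
    have h1 : Filter.Tendsto (fun n : ℕ => 1 / ((n : ℝ) + 1)) Filter.atTop (nhds 0) :=
      tendsto_one_div_add_atTop_nhds_zero_nat
    have := h1.smul_const ω
    rwa [zero_smul] at this
  refine mem_closure_of_tendsto htend (Filter.Eventually.of_forall fun n => ?_)
  refine mem_extAmpleCone.mpr fun I hI => ?_
  exact angleCone_smul_mem hI (by positivity)

lemma extAmpleCone_isOpen (W : WallCrossingSetup r m) :
    IsOpen (extAmpleCone W.D W.ωm) :=
  (Set.toFinite (anticones W.D W.ωm)).isOpen_biInter fun J hJ =>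
    angleCone_isOpen (W.starM.2 J hJ)

/-- The relint ball inside the wall facet. -/
lemma exists_wall_ball (W : WallCrossingSetup r m) :
    ∃ ε > 0, ∀ w : Fin r → ℝ, pairR w W.e = 0 → ‖w‖ < ε →
      W.ω₀ + w ∈ wall W.e ∩ closure (extAmpleCone W.D W.ωp) := by
  set A := wall W.e ∩ closure (extAmpleCone W.D W.ωp) with hA
  have hω₀A : W.ω₀ ∈ A := intrinsicInterior_subset W.interior₀
  have h0A : (0 : Fin r → ℝ) ∈ A :=
    ⟨by simp [wall, pairR], zero_mem_closure_extAmpleCone _ _⟩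
  have hspanA : Submodule.span ℝ A ≤ (affineSpan ℝ A).direction := by
    rw [Submodule.span_le]
    intro a ha
    have h1 : a ∈ affineSpan ℝ A := subset_affineSpan ℝ A ha
    have h0 : (0 : Fin r → ℝ) ∈ affineSpan ℝ A := subset_affineSpan ℝ A h0A
    simpa using AffineSubspace.vsub_mem_direction h1 h0
  have hwall_dir : ∀ w : Fin r → ℝ, pairR w W.e = 0 → w ∈ (affineSpan ℝ A).direction := by
    intro w hw
    apply hspanA
    have : Submodule.span ℝ A = Submodule.span ℝ (wall W.e) := W.wallSpanEq
    rw [this]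
    exact Submodule.subset_span hw
  obtain ⟨y, hy, hyc⟩ := W.interior₀
  rw [mem_interior_iff_mem_nhds, nhds_subtype_eq_comap, Filter.mem_comap] at hy
  obtain ⟨t, ht, hts⟩ := hy
  rw [hyc] at ht
  obtain ⟨ε, hεpos, hball⟩ := Metric.mem_nhds_iff.mp ht
  refine ⟨ε, hεpos, fun w hw hwε => ?_⟩
  have hmem : W.ω₀ + w ∈ affineSpan ℝ A := by
    have := AffineSubspace.vadd_mem_of_mem_direction (hwall_dir w hw)
      (subset_affineSpan ℝ A hω₀A)
    rwa [vadd_eq_add, add_comm] at this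
  have hdist : (W.ω₀ + w) ∈ Metric.ball W.ω₀ ε := by
    rw [Metric.mem_ball, dist_eq_norm]
    simpa using hwε
  have hmem' : (⟨W.ω₀ + w, hmem⟩ : affineSpan ℝ A) ∈ Subtype.val ⁻¹' t := hball hdist
  exact hts hmem'

lemma sum_ite_mem_smul {E : Type*} [AddCommGroup E] [Module ℝ E]
    (I : Finset (Fin m)) (a : Fin m → ℝ) (v : Fin m → E) :
    ∑ i, (if i ∈ I then a i else 0) • v i = ∑ i ∈ I, a i • v i := by
  have : ∀ i, (if i ∈ I then a i else 0) • v i = if i ∈ I then a i • v i else 0 := by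
    intro i; split <;> simp
  rw [Finset.sum_congr rfl fun i _ => this i, Finset.sum_ite_mem, Finset.univ_inter]

/-- The key geometric lemma. -/
lemma key (W : WallCrossingSetup r m) (S : Set (Fin m))
    (hI : ∃ I ∈ anticones W.D W.ωp, (I : Set (Fin m)) ⊆ S)
    (hj : ∃ j ∈ S, pairZ (W.D j) W.e < 0) :
    ∃ J ∈ anticones W.D W.ωm, (J : Set (Fin m)) ⊆ S := by
  obtain ⟨I, hI𝒜, hIS⟩ := hI
  obtain ⟨j, hjS, hdj⟩ := hj
  set d := DR W.D with hd
  have hc : pairR W.ωm W.e < 0 := W.negM _ (self_mem_extAmpleCone _ _)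
  have hdjR : (pairZ (W.D j) W.e : ℝ) < 0 := by exact_mod_cast hdj
  set κ := (pairZ (W.D j) W.e : ℝ) / pairR W.ωm W.e with hκ
  have hκpos : 0 < κ := div_pos_of_neg_of_neg hdjR hc
  set w := d j - κ • W.ωm with hw
  have hwwall : pairR w W.e = 0 := by
    have hsub : w = d j + (-κ) • W.ωm := by rw [hw]; module
    rw [hsub, pairR_add, pairR_smul, hd, pairR_DR, hκ, neg_mul,
      div_mul_cancel₀ _ (ne_of_lt hc)]
    ring
  obtain ⟨ε, hεpos, hball⟩ := exists_wall_ball W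
  set δ := ε / (2 * (‖w‖ + 1)) with hδ
  have hδpos : 0 < δ := by
    apply div_pos hεpos; positivity
  have hδw : ‖δ • w‖ < ε := by
    rw [norm_smul, Real.norm_eq_abs, abs_of_pos hδpos, hδ]
    rw [div_mul_eq_mul_div, div_lt_iff₀ (by positivity)]
    nlinarith [norm_nonneg w, hεpos]
  have hy₀ : W.ω₀ + δ • w ∈ wall W.e ∩ closure (extAmpleCone W.D W.ωp) :=
    hball _ (by rw [pairR_smul, hwwall, mul_zero]) hδw
  have hy₀m : W.ω₀ + δ • w ∈ closure (extAmpleCone W.D W.ωm) := by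
    have h' := hy₀
    rw [W.wallEq] at h'
    exact h'.2
  -- q₀ = ω₀ + δ • d j lies in C₋
  have hq₀ : W.ω₀ + δ • d j ∈ extAmpleCone W.D W.ωm := by
    refine mem_extAmpleCone.mpr fun J hJ => ?_
    have hspan := W.starM.2 J hJ
    have hyJ : W.ω₀ + δ • w ∈ closure (angleCone d J) :=
      closure_mono (fun v hv => mem_extAmpleCone.mp hv J hJ) hy₀m
    have huJ : (δ * κ) • W.ωm ∈ angleCone d J :=
      angleCone_smul_mem hJ (mul_pos hδpos hκpos)
    have hsum := angleCone_closure_add_mem hspan hyJ huJ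
    have heq : W.ω₀ + δ • d j = (W.ω₀ + δ • w) + (δ * κ) • W.ωm := by
      rw [hw]; module
    rwa [heq]
  -- perturb towards ωp
  obtain ⟨ρr, hρrpos, hballρ⟩ :=
    Metric.isOpen_iff.mp (extAmpleCone_isOpen W) _ hq₀
  set v := W.ωp - (W.ω₀ + δ • d j) with hv
  set η := min (1/2 : ℝ) (ρr / (2 * (‖v‖ + 1))) with hη
  have hηpos : 0 < η := lt_min (by norm_num) (by positivity)
  have hηlt1 : η < 1 := lt_of_le_of_lt (min_le_left _ _) (by norm_num)
  set q := (W.ω₀ + δ • d j) + η • v with hqdef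
  have hqC : q ∈ extAmpleCone W.D W.ωm := by
    apply hballρ
    rw [Metric.mem_ball, hqdef, dist_eq_norm]
    have h1 : (W.ω₀ + δ • d j) + η • v - (W.ω₀ + δ • d j) = η • v := by module
    rw [h1, norm_smul, Real.norm_eq_abs, abs_of_pos hηpos]
    have h2 : η ≤ ρr / (2 * (‖v‖ + 1)) := min_le_right _ _
    have h3 : η * ‖v‖ ≤ ρr / (2 * (‖v‖ + 1)) * ‖v‖ :=
      mul_le_mul_of_nonneg_right h2 (norm_nonneg v)
    have h4 : ρr / (2 * (‖v‖ + 1)) * ‖v‖ < ρr := by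
      rw [div_mul_eq_mul_div, div_lt_iff₀ (by positivity)]
      nlinarith [norm_nonneg v, hρrpos]
    linarith
  -- a positive representation of q on I, plus the j-term
  have hBmem : η • W.ωp + (1 - η) • W.ω₀ ∈ angleCone d I := by
    have hopen := angleCone_isOpen (W.starP.2 I hI𝒜)
    have hωpI : W.ωp ∈ angleCone d I := hI𝒜
    have hω₀cl : W.ω₀ ∈ closure (angleCone d I) := by
      have h1 : W.ω₀ ∈ closure (extAmpleCone W.D W.ωp) :=
        (intrinsicInterior_subset W.interior₀).2
      exact closure_mono (fun x hx => mem_extAmpleCone.mp hx I hI𝒜) h1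
    have hcombo := (angleCone_convex d I).combo_interior_closure_mem_interior
      (a := η) (b := 1 - η) (by rwa [hopen.interior_eq]) hω₀cl hηpos (by linarith) (by ring)
    rwa [hopen.interior_eq] at hcombo
  obtain ⟨a, hapos, haeq⟩ := hBmem
  have hqrep : q = (∑ i ∈ I, a i • d i) + ((1 - η) * δ) • d j := by
    have h0 : q = (η • W.ωp + (1 - η) • W.ω₀) + ((1 - η) * δ) • d j := by
      rw [hqdef, hv]; module
    rw [h0, ← haeq]
  -- apply the abstract lemma
  have hfeas : ∃ x, Feas d W.ωm x := by
    obtain ⟨a₀, ha₀pos, ha₀⟩ := W.starM.1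
    refine ⟨a₀, fun i => (ha₀pos i (Finset.mem_univ i)).le, ?_⟩
    rw [← ha₀]
  have hq' : ∀ J : Finset (Fin m), W.ωm ∈ angleCone d J →
      ∃ b : Fin m → ℝ, (∀ i, 0 ≤ b i) ∧ (∀ i, b i ≠ 0 → i ∈ J) ∧ (∀ i ∈ J, 0 < b i) ∧
        ∑ i, b i • d i = q := by
    intro J hJ
    have hqJ : q ∈ angleCone d J := mem_extAmpleCone.mp hqC J hJ
    obtain ⟨b, hbpos, hbeq⟩ := hqJ
    refine ⟨fun i => if i ∈ J then b i else 0, ?_, ?_, ?_, ?_⟩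
    · intro i
      dsimp only
      by_cases hiJ : i ∈ J
      · rw [if_pos hiJ]; exact (hbpos i hiJ).le
      · rw [if_neg hiJ]
    · intro i hi
      dsimp only at hi
      by_contra hiJ
      rw [if_neg hiJ] at hi
      exact hi rfl
    · intro i hi; dsimp only; rw [if_pos hi]; exact hbpos i hi
    · rw [sum_ite_mem_smul, ← hbeq]
  have hqS : ∃ c : Fin m → ℝ, (∀ i, 0 ≤ c i) ∧ (∀ i, c i ≠ 0 → i ∈ S) ∧
      ∑ i, c i • d i = q := by
    refine ⟨fun i => (if i ∈ I then a i else 0) + (if i = j then (1 - η) * δ else 0),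
      ?_, ?_, ?_⟩
    · intro i
      dsimp only
      apply add_nonneg
      · by_cases hiI : i ∈ I
        · rw [if_pos hiI]; exact (hapos i hiI).le
        · rw [if_neg hiI]
      · by_cases hij : i = j
        · rw [if_pos hij]; exact mul_nonneg (by linarith) hδpos.le
        · rw [if_neg hij]
    · intro i hi
      dsimp only at hi
      by_cases hiI : i ∈ I
      · exact hIS hiI
      · by_cases hij : i = j
        · rw [hij]; exact hjS
        · rw [if_neg hiI, if_neg hij, add_zero] at hi
          exact absurd rfl hi
    · have hsplit : ∀ i, ((if i ∈ I then a i else 0) + (if i = j then (1 - η) * δ else 0)) • d i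
          = (if i ∈ I then a i else 0) • d i + (if i = j then (1 - η) * δ else 0) • d i :=
        fun i => add_smul _ _ _
      rw [Finset.sum_congr rfl fun i _ => hsplit i, Finset.sum_add_distrib,
        sum_ite_mem_smul]
      have : ∀ i, (if i = j then (1 - η) * δ else 0) • d i
          = if i = j then ((1 - η) * δ) • d i else 0 := by
        intro i; split <;> simp
      rw [Finset.sum_congr rfl fun i _ => this i, Finset.sum_ite_eq' Finset.univ j,
        if_pos (Finset.mem_univ j), ← hqrep]
  obtain ⟨J, hJω, hJS⟩ := key_abstract d W.ωm q S hfeas hq' hqS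
  exact ⟨J, hJω, hJS⟩

end Geom


section Main

variable {r m : ℕ}

lemma pairR_angle_rep {D : Fin m → Fin r → ℤ} (e : Fin r → ℤ) {ω : Fin r → ℝ}
    {J : Finset (Fin m)} (hJ : ω ∈ angleCone (DR D) J) :
    ∃ a : Fin m → ℝ, (∀ i ∈ J, 0 < a i) ∧
      pairR ω e = ∑ i ∈ J, a i * (pairZ (D i) e : ℝ) := by
  obtain ⟨a, ha, rfl⟩ := hJ
  refine ⟨a, ha, ?_⟩
  rw [pairR_sum]
  exact Finset.sum_congr rfl fun i _ => by rw [pairR_smul, pairR_DR]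

lemma anticone_meets_Mminus (W : WallCrossingSetup r m) {J : Finset (Fin m)}
    (hJ : J ∈ anticones W.D W.ωm) : ∃ i ∈ J, pairZ (W.D i) W.e < 0 := by
  have hc : pairR W.ωm W.e < 0 := W.negM _ (self_mem_extAmpleCone _ _)
  obtain ⟨a, ha, hsum⟩ := pairR_angle_rep (e := W.e) hJ
  by_contra hall
  push_neg at hall
  have : 0 ≤ pairR W.ωm W.e := by
    rw [hsum]
    apply Finset.sum_nonneg
    intro i hi
    have h0 : (0:ℝ) ≤ (pairZ (W.D i) W.e : ℝ) := by exact_mod_cast hall i hi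
    exact mul_nonneg (ha i hi).le h0
  linarith

lemma mem_Uset {D : Fin m → Fin r → ℤ} {ω : Fin r → ℝ} {z : Fin m → ℂ} :
    z ∈ Uset D ω ↔ ∃ I ∈ anticones D ω, ∀ i ∈ I, z i ≠ 0 := by
  simp [Uset]

/-- Main identity, one-sided version. -/
lemma main_one (W : WallCrossingSetup r m) :
    Uset W.D W.ωp ∩ Uset W.D W.ωm
      = Uset W.D W.ωp \ { z : Fin m → ℂ | ∀ i ∈ Mminus W.D W.e, z i = 0 } := by
  ext z
  constructor
  · rintro ⟨hzp, hzm⟩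
    refine ⟨hzp, ?_⟩
    obtain ⟨J, hJ, hJz⟩ := mem_Uset.mp hzm
    obtain ⟨i, hiJ, hid⟩ := anticone_meets_Mminus W hJ
    intro hz
    exact hJz i hiJ (hz i (by simp [Mminus, hid]))
  · rintro ⟨hzp, hzm⟩
    refine ⟨hzp, ?_⟩
    simp only [Set.mem_setOf_eq, not_forall] at hzm
    obtain ⟨j, hjM, hjz⟩ := hzm
    have hdj : pairZ (W.D j) W.e < 0 := by
      simpa [Mminus] using hjM
    obtain ⟨I, hI, hIz⟩ := mem_Uset.mp hzp
    obtain ⟨J, hJ, hJS⟩ := key W {i | z i ≠ 0}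
      ⟨I, hI, fun i hi => hIz i (Finset.mem_coe.mp hi)⟩ ⟨j, hjz, hdj⟩
    exact mem_Uset.mpr ⟨J, hJ, fun i hi => hJS (Finset.mem_coe.mpr hi)⟩

/-- The wall-crossing setup with the roles of `+` and `-` exchanged. -/
def swapSetup (W : WallCrossingSetup r m) : WallCrossingSetup r m where
  D := W.D
  ωp := W.ωm
  ωm := W.ωp
  ω₀ := W.ω₀
  e := -W.e
  hr := W.hr
  hrm := W.hrm
  starP := W.starM
  starM := W.starP
  he := neg_ne_zero.mpr W.he
  posP := fun v hv => by rw [pairR_neg]; linarith [W.negM v hv]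
  negM := fun v hv => by rw [pairR_neg]; linarith [W.posP v hv]
  crepant := by
    have := W.crepant
    simp only [pairZ_neg]
    rw [Finset.sum_neg_distrib, this, neg_zero]
  wallEq := by rw [wall_neg]; exact W.wallEq.symm
  wallSpanEq := by rw [wall_neg, ← W.wallEq]; exact W.wallSpanEq
  interior₀ := by
    have h : wall (-W.e) ∩ closure (extAmpleCone W.D W.ωm)
        = wall W.e ∩ closure (extAmpleCone W.D W.ωp) := by
      rw [wall_neg, ← W.wallEq]
    rw [show (wall (-W.e) ∩ closure (extAmpleCone W.D W.ωm)) =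
      (wall W.e ∩ closure (extAmpleCone W.D W.ωp)) from h]
    exact W.interior₀

end Main

/-- The loci of indeterminacy of `φ : X_+ ⇢ X_-` and its inverse:
`U_+ ∩ U_- = U_+ ∖ {z : z_i = 0 ∀ i ∈ M_-} = U_- ∖ {z : z_i = 0 ∀ i ∈ M_+}`. -/
theorem indeterminacy_loci {r m : ℕ} (W : WallCrossingSetup r m) :
    Uset W.D W.ωp ∩ Uset W.D W.ωm
        = Uset W.D W.ωp \ { z : Fin m → ℂ | ∀ i ∈ Mminus W.D W.e, z i = 0 } ∧
    Uset W.D W.ωp ∩ Uset W.D W.ωm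
        = Uset W.D W.ωm \ { z : Fin m → ℂ | ∀ i ∈ Mplus W.D W.e, z i = 0 } := by
  constructor
  · exact main_one W
  · have h := main_one (swapSetup W)
    rw [show Mminus (swapSetup W).D (swapSetup W).e = Mplus W.D W.e from
      Mminus_neg W.D W.e] at h
    calc Uset W.D W.ωp ∩ Uset W.D W.ωm
        = Uset W.D W.ωm ∩ Uset W.D W.ωp := Set.inter_comm _ _
      _ = Uset W.D W.ωm \ { z : Fin m → ℂ | ∀ i ∈ Mplus W.D W.e, z i = 0 } := h

end CTC
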